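/- Let L be a complete enriched Lie algebra with closed-lower-central series L^{(k)} defined as the closure of the k-th lower central series term L^k. Then [L^{(k)}, L^{(ℓ)}] ⊆ L^{(k+ℓ)} for all k, ℓ ≥ 1. -/

import Mathlib

section EnrichedPre

variable {L : Type*} [LieRing L] [LieAlgebra ℚ L]

/-- `lcsIn A n` is the span of iterated Lie brackets of length `n+1` with entries in `A`
(so `lcsIn ⊤ (k-1)` is the `k`-th term `L^k` of the lower central series). -/
def lcsIn (A : Submodule ℚ L) : ℕ → Submodule ℚ L
  | 0 => A
  | n + 1 => Submodule.span ℚ {z : L | ∃ x ∈ A, ∃ y ∈ lcsIn A n, ⁅x, y⁆ = z}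

/-- The closure of a subspace `S` in an enriched Lie algebra `(L, {I α})`:
the set of limits of coherent families of elements of `S`, i.e. of those `x`
whose image in each `L ⧸ I α` lies in the image of `S`. -/
def encl {ι : Type*} (I : ι → LieIdeal ℚ L) (S : Submodule ℚ L) : Submodule ℚ L where
  carrier := {x : L | ∀ α, ∃ s ∈ S, x - s ∈ (I α : Submodule ℚ L)}
  add_mem' := by
    intro a b ha hb α
    obtain ⟨s, hs, h1⟩ := ha α
    obtain ⟨t, ht, h2⟩ := hb α
    exact ⟨s + t, S.add_mem hs ht, by
      simpa [add_sub_add_comm] using Submodule.add_mem _ h1 h2⟩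
  zero_mem' := fun α => ⟨0, S.zero_mem, by simp⟩
  smul_mem' := by
    intro c a ha α
    obtain ⟨s, hs, h1⟩ := ha α
    exact ⟨c • s, S.smul_mem c hs, by
      simpa [smul_sub] using Submodule.smul_mem _ c h1⟩

/-- `(L, {I α})` is an enriched Lie algebra: a directed family of ideals with
finite-dimensional nilpotent quotients and trivial intersection. -/
def IsEnriched {ι : Type*} (I : ι → LieIdeal ℚ L) : Prop :=
  (∀ α β, ∃ γ, I γ ≤ I α ⊓ I β) ∧
  (∀ α, FiniteDimensional ℚ (L ⧸ I α)) ∧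
  (∀ α, LieRing.IsNilpotent (L ⧸ I α)) ∧
  (⨅ α, I α) = ⊥

/-- Completeness of `(L, {I α})`: every coherent family in `lim_α L/I α`
(presented by compatible representatives) has a limit in `L`. -/
def IsCompleteWrt {ι : Type*} (I : ι → LieIdeal ℚ L) : Prop :=
  ∀ y : ι → L, (∀ α β, I β ≤ I α → y β - y α ∈ (I α : Submodule ℚ L)) →
    ∃ x : L, ∀ α, x - y α ∈ (I α : Submodule ℚ L)

end EnrichedPre

lemma lcsIn_bracket {L : Type*} [LieRing L] [LieAlgebra ℚ L] :
    ∀ (k l : ℕ) (x y : L), x ∈ lcsIn (⊤ : Submodule ℚ L) k →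
      y ∈ lcsIn (⊤ : Submodule ℚ L) l → ⁅x, y⁆ ∈ lcsIn (⊤ : Submodule ℚ L) (k + l + 1) := by
  intro k
  induction k with
  | zero =>
    intro l x y _ hy
    have : (0 : ℕ) + l + 1 = l + 1 := by omega
    rw [this]
    exact Submodule.subset_span ⟨x, Submodule.mem_top, y, hy, rfl⟩
  | succ k ih =>
    intro l x y hx hy
    have key : ∀ z ∈ {z : L | ∃ a ∈ (⊤ : Submodule ℚ L), ∃ b ∈ lcsIn (⊤ : Submodule ℚ L) k,
        ⁅a, b⁆ = z}, ⁅z, y⁆ ∈ lcsIn (⊤ : Submodule ℚ L) (k + 1 + l + 1) := by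
      rintro z ⟨a, -, b, hb, rfl⟩
      have h1 : ⁅b, y⁆ ∈ lcsIn (⊤ : Submodule ℚ L) (k + l + 1) := ih l b y hb hy
      have h2 : ⁅a, ⁅b, y⁆⁆ ∈ lcsIn (⊤ : Submodule ℚ L) (k + l + 2) :=
        Submodule.subset_span ⟨a, Submodule.mem_top, _, h1, rfl⟩
      have h3 : ⁅a, y⁆ ∈ lcsIn (⊤ : Submodule ℚ L) (l + 1) :=
        Submodule.subset_span ⟨a, Submodule.mem_top, y, hy, rfl⟩
      have h4 : ⁅b, ⁅a, y⁆⁆ ∈ lcsIn (⊤ : Submodule ℚ L) (k + (l + 1) + 1) :=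
        ih (l + 1) b _ hb h3
      have e : ⁅⁅a, b⁆, y⁆ = ⁅a, ⁅b, y⁆⁆ - ⁅b, ⁅a, y⁆⁆ := by
        rw [lie_lie]
      rw [e]
      have : k + 1 + l + 1 = k + l + 2 := by omega
      rw [this]
      have h4' : ⁅b, ⁅a, y⁆⁆ ∈ lcsIn (⊤ : Submodule ℚ L) (k + l + 2) := by
        have : k + (l + 1) + 1 = k + l + 2 := by omega
        rwa [this] at h4
      exact Submodule.sub_mem _ h2 h4'
    have hx' : x ∈ Submodule.span ℚ {z : L | ∃ a ∈ (⊤ : Submodule ℚ L),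
        ∃ b ∈ lcsIn (⊤ : Submodule ℚ L) k, ⁅a, b⁆ = z} := hx
    refine Submodule.span_induction (p := fun z _ => ⁅z, y⁆ ∈ lcsIn (⊤ : Submodule ℚ L) (k + 1 + l + 1))
      key ?_ ?_ ?_ hx'
    · simp
    · intro u v _ _ hu hv
      rw [add_lie]; exact Submodule.add_mem _ hu hv
    · intro c u _ hu
      rw [smul_lie]; exact Submodule.smul_mem _ c hu

/-- In a complete enriched Lie algebra,
`[L^{(k)}, L^{(ℓ)}] ⊆ L^{(k+ℓ)}` where `L^{(k)}` is the closure of the `k`-th lower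
central series term.  (Here `encl I (lcsIn ⊤ (k-1))` is `L^{(k)}`, `k ≥ 1`.) -/
theorem stmt7 {ι L : Type*} [LieRing L] [LieAlgebra ℚ L]
    (I : ι → LieIdeal ℚ L) (hE : IsEnriched I) (hC : IsCompleteWrt I)
    (k l : ℕ) (x y : L)
    (hx : x ∈ encl I (lcsIn (⊤ : Submodule ℚ L) k))
    (hy : y ∈ encl I (lcsIn (⊤ : Submodule ℚ L) l)) :
    ⁅x, y⁆ ∈ encl I (lcsIn (⊤ : Submodule ℚ L) (k + l + 1)) := by
  intro α
  obtain ⟨s, hs, hxs⟩ := hx α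
  obtain ⟨t, ht, hyt⟩ := hy α
  refine ⟨⁅s, t⁆, lcsIn_bracket k l s t hs ht, ?_⟩
  have e : ⁅x, y⁆ - ⁅s, t⁆ = ⁅x - s, y⁆ + ⁅s, y - t⁆ := by
    simp only [sub_lie, lie_sub]; abel
  rw [e]
  have h1 : ⁅x - s, y⁆ ∈ (I α : Submodule ℚ L) := by
    have : (⁅x - s, y⁆ : L) = -⁅y, x - s⁆ := by rw [← lie_skew]
    rw [this]
    exact Submodule.neg_mem _ ((I α).lie_mem hxs)
  have h2 : ⁅s, y - t⁆ ∈ (I α : Submodule ℚ L) := (I α).lie_mem hyt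
  exact Submodule.add_mem _ h1 h2
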